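/- Inversion of the Pauli-Lindblad parameter/eigenvalue relation: let λ : V → ℝ and define f : V → ℝ by f_a = exp(−2 Σ_{k ∈ V} λ_k·⟨a,k⟩_ℤ). Then for every a ∈ V with a ≠ 0 one has λ_a = 4^{-n} Σ_{k ∈ V, k ≠ 0} χ(a,k)·Real.log(f_k). -/

import Mathlib

/-- Index set of `n`-qubit Pauli words. -/
abbrev V (n : ℕ) : Type := (Fin n → ZMod 2) × (Fin n → ZMod 2)

/-- Symplectic inner product `⟨a,b⟩ = Σᵢ (aₓᵢ·b_zᵢ + a_zᵢ·bₓᵢ) ∈ ZMod 2`. -/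
def sform {n : ℕ} (a b : V n) : ZMod 2 := ∑ i, (a.1 i * b.2 i + a.2 i * b.1 i)

/-- The sign `χ(a,b) = (−1)^⟨a,b⟩ ∈ ℝ`. -/
noncomputable def chi {n : ℕ} (a b : V n) : ℝ := (-1 : ℝ) ^ (sform a b).val

/-- Integer (real-valued) lift `⟨a,b⟩_ℤ ∈ {0,1} ⊂ ℝ`. -/
noncomputable def sformZ {n : ℕ} (a b : V n) : ℝ := ((sform a b).val : ℝ)

lemma neg_one_pow_val_add (x y : ZMod 2) :
    (-1 : ℝ) ^ ((x + y).val) = (-1 : ℝ) ^ x.val * (-1 : ℝ) ^ y.val := by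
  have h : ∀ x : ZMod 2, x = 0 ∨ x = 1 := by decide
  rcases h x with hx | hx <;> rcases h y with hy | hy <;> subst hx <;> subst hy <;>
    norm_num [show ((1 : ZMod 2) + 1) = 0 from by decide, show ZMod.val (2 : ZMod 2) = 0 from by decide, ZMod.val_zero, ZMod.val_one]

lemma sform_add_left {n : ℕ} (a b c : V n) :
    sform (a + b) c = sform a c + sform b c := by
  unfold sform
  rw [← Finset.sum_add_distrib]
  exact Finset.sum_congr rfl fun i _ => by simp [Prod.fst_add, Prod.snd_add]; ring

lemma sform_add_right {n : ℕ} (a b c : V n) :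
    sform a (b + c) = sform a b + sform a c := by
  unfold sform
  rw [← Finset.sum_add_distrib]
  exact Finset.sum_congr rfl fun i _ => by simp [Prod.fst_add, Prod.snd_add]; ring

lemma sform_symm {n : ℕ} (a b : V n) : sform a b = sform b a := by
  unfold sform
  exact Finset.sum_congr rfl fun i _ => by ring

lemma sform_zero_right {n : ℕ} (a : V n) : sform a 0 = 0 := by
  simp [sform]

lemma chi_zero_right {n : ℕ} (a : V n) : chi a 0 = 1 := by
  simp [chi, sform_zero_right]

lemma chi_zero_left {n : ℕ} (a : V n) : chi 0 a = 1 := by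
  rw [chi, sform_symm, sform_zero_right]; simp

lemma chi_add_left {n : ℕ} (a b c : V n) : chi (a + b) c = chi a c * chi b c := by
  rw [chi, sform_add_left, neg_one_pow_val_add]; rfl

lemma chi_eq_one_sub {n : ℕ} (a b : V n) : chi a b = 1 - 2 * sformZ a b := by
  unfold chi sformZ
  have h : (sform a b) = 0 ∨ (sform a b) = 1 := by
    generalize sform a b = x; revert x; decide
  rcases h with h | h <;> rw [h] <;>
    norm_num [ZMod.val_zero, ZMod.val_one]

lemma exists_sform_one {n : ℕ} (c : V n) (hc : c ≠ 0) : ∃ b : V n, sform c b = 1 := by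
  have h2 : ∀ x : ZMod 2, x ≠ 0 → x = 1 := by decide
  have : c.1 ≠ 0 ∨ c.2 ≠ 0 := by
    by_contra h
    push_neg at h
    exact hc (Prod.ext h.1 h.2)
  rcases this with h | h
  · obtain ⟨i, hi⟩ := Function.ne_iff.mp h
    refine ⟨(0, Pi.single i 1), ?_⟩
    unfold sform
    rw [Finset.sum_eq_single i]
    · simp [h2 _ hi]
    · intro j _ hj; simp [Pi.single_apply, hj]
    · simp
  · obtain ⟨i, hi⟩ := Function.ne_iff.mp h
    refine ⟨(Pi.single i 1, 0), ?_⟩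
    unfold sform
    rw [Finset.sum_eq_single i]
    · simp [h2 _ hi]
    · intro j _ hj; simp [Pi.single_apply, hj]
    · simp

lemma chi_sum_eq_zero {n : ℕ} (c : V n) (hc : c ≠ 0) : ∑ k : V n, chi c k = 0 := by
  obtain ⟨b, hb⟩ := exists_sform_one c hc
  have h1 : ∑ k : V n, chi c (k + b) = ∑ k : V n, chi c k :=
    Fintype.sum_equiv (Equiv.addRight b) _ _ (fun k => rfl)
  have h2 : ∀ k : V n, chi c (k + b) = - chi c k := by
    intro k
    rw [chi, chi, sform_add_right, hb, neg_one_pow_val_add]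
    norm_num [ZMod.val_one]
  rw [Finset.sum_congr rfl (fun k _ => h2 k), Finset.sum_neg_distrib] at h1
  linarith

lemma card_V (n : ℕ) : (Fintype.card (V n) : ℝ) = 4 ^ n := by
  have : Fintype.card (V n) = 2 ^ n * 2 ^ n := by
    simp [Fintype.card_prod, Fintype.card_fun]
  rw [this]
  push_cast
  rw [← mul_pow]
  norm_num

lemma add_self_V {n : ℕ} (v : V n) : v + v = 0 := by
  refine Prod.ext ?_ ?_ <;> funext i <;>
    simpa using (CharTwo.add_self_eq_zero (R := ZMod 2) _)

theorem pauli_lindblad_parameter_inversion (n : ℕ) (hn : 1 ≤ n) (lam : V n → ℝ) (f : V n → ℝ)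
    (hf : ∀ a : V n, f a = Real.exp (-2 * ∑ k : V n, lam k * sformZ a k))
    (a : V n) (ha : a ≠ 0) :
    lam a = ((4 : ℝ) ^ n)⁻¹ *
      ∑ k ∈ Finset.univ.filter (fun k : V n => k ≠ 0), chi a k * Real.log (f k) := by
  have key : ∀ k : V n, chi a k * Real.log (f k)
      = ∑ j : V n, lam j * (chi (a + j) k - chi a k) := by
    intro k
    rw [hf k, Real.log_exp]
    simp only [Finset.mul_sum]
    refine Finset.sum_congr rfl fun j _ => ?_
    have h1 : chi (a + j) k = chi a k * chi j k := chi_add_left a j k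
    have h2 : chi j k = 1 - 2 * sformZ k j := by
      rw [chi_eq_one_sub, sformZ, sformZ, sform_symm]
    rw [h1, h2]
    ring
  rw [Finset.sum_congr rfl (fun k _ => key k)]
  have hext : ∑ k ∈ Finset.univ.filter (fun k : V n => k ≠ 0),
        ∑ j : V n, lam j * (chi (a + j) k - chi a k)
      = ∑ k : V n, ∑ j : V n, lam j * (chi (a + j) k - chi a k) := by
    rw [Finset.sum_filter]
    refine Finset.sum_congr rfl fun k _ => ?_
    by_cases hk : k = 0
    · simp [hk, chi_zero_right]
    · simp [hk]
  rw [hext, Finset.sum_comm]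
  have hinner : ∀ j : V n, ∑ k : V n, lam j * (chi (a + j) k - chi a k)
      = if j = a then lam a * 4 ^ n else 0 := by
    intro j
    rw [← Finset.mul_sum, Finset.sum_sub_distrib, chi_sum_eq_zero a ha, sub_zero]
    by_cases hj : j = a
    · rw [hj, add_self_V a, if_pos rfl]
      simp only [chi_zero_left, Finset.sum_const, Finset.card_univ, nsmul_eq_mul, mul_one]
      rw [card_V]
    · rw [if_neg hj, chi_sum_eq_zero, mul_zero]
      intro h
      apply hj
      have := congrArg (fun x => a + x) h
      simp only [add_zero] at this
      rw [← add_assoc, add_self_V, zero_add] at this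
      exact this
  rw [Finset.sum_congr rfl (fun j _ => hinner j), Finset.sum_ite_eq' Finset.univ a
    (fun _ => lam a * 4 ^ n)]
  simp only [Finset.mem_univ, if_pos]
  rw [← mul_assoc]
  have h4 : (4 : ℝ) ^ n ≠ 0 := by positivity
  field_simp
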